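/- Let T be a rooted binary tree whose nodes are labeled by vertex subsets of a graph G such that the root is labeled V, and each internal node U has two children U₀, U₁ that are disjoint subsets of U with |U₀|, |U₁| ≤ (2/3)|U|. Then for any real r > 0, the nodes whose label sizes lie in the interval (2r/3, r] are pairwise disjoint, and hence there are at most 3n/(2r) such nodes, where n = |V|. -/
import Mathlib


open scoped Classical ComplexOrder
open Finset

/-- Outer boundary: vertices outside `U` adjacent to some vertex of `U`. -/
noncomputable def outerBoundary {V : Type*} [Fintype V] (G : SimpleGraph V) (U : Finset V) :
    Finset V :=
  Finset.univ.filter fun v => v ∉ U ∧ ∃ u ∈ U, G.Adj u v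

/-- Inner boundary: vertices of `U` adjacent to some vertex outside `U`. -/
noncomputable def innerBoundary {V : Type*} [Fintype V] (G : SimpleGraph V) (U : Finset V) :
    Finset V :=
  Finset.univ.filter fun u => u ∈ U ∧ ∃ v, v ∉ U ∧ G.Adj u v

/-- Two vertex sets are disconnected: no edge of `G` joins them. -/
def Disconn {V : Type*} (G : SimpleGraph V) (A B : Finset V) : Prop :=
  ∀ a ∈ A, ∀ b ∈ B, ¬ G.Adj a b

/-- A `d`-correctable family of a graph `G`: closed under subsets (Trivial), contains all
sets of size `< d` (Distance), closed under unions of pairwise disjoint pairwise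
disconnected members (Union), and closed under expansion (Expansion). -/
def IsCorrectableFamily {V : Type*} [Fintype V] [DecidableEq V] (G : SimpleGraph V) (d : ℕ)
    (F : Set (Finset V)) : Prop :=
  (∀ U ∈ F, ∀ W ⊆ U, W ∈ F) ∧
  (∀ U : Finset V, U.card < d → U ∈ F) ∧
  (∀ (ℓ : ℕ) (U : Fin ℓ → Finset V), (∀ i, U i ∈ F) →
    (∀ i j, i ≠ j → Disjoint (U i) (U j) ∧ Disconn G (U i) (U j)) →
    Finset.univ.biUnion U ∈ F) ∧
  (∀ U ∈ F, ∀ T ∈ F, outerBoundary G U ⊆ T → U ∪ T ∈ F)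

/-- A set is `d`-correctable with respect to `G` if it belongs to every
`d`-correctable family of `G`. -/
def IsCorrectableSet {V : Type*} [Fintype V] [DecidableEq V] (G : SimpleGraph V) (d : ℕ)
    (U : Finset V) : Prop :=
  ∀ F : Set (Finset V), IsCorrectableFamily G d F → U ∈ F

/-- The (induced subgraph on) `H` admits a 2/3-balanced separator of size at most `t`. -/
def SepUpTo {V : Type*} [DecidableEq V] (G : SimpleGraph V) (H : Finset V) (t : ℝ) : Prop :=
  ∃ T U₁ U₂ : Finset V, T ∪ U₁ ∪ U₂ = H ∧
    Disjoint T U₁ ∧ Disjoint T U₂ ∧ Disjoint U₁ U₂ ∧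
    Disconn G U₁ U₂ ∧
    3 * U₁.card ≤ 2 * H.card ∧ 3 * U₂.card ≤ 2 * H.card ∧
    (T.card : ℝ) ≤ t

/-- `G` has separation profile `s_G(r) ≤ β · r^c` for all `r`: every vertex subset `H`
admits a 2/3-balanced separator of size at most `β · |H|^c`. -/
def HasSepProfile {V : Type*} [DecidableEq V] (G : SimpleGraph V) (β c : ℝ) : Prop :=
  ∀ H : Finset V, SepUpTo G H (β * (H.card : ℝ) ^ c)

/-- `A` is a union of pairwise disjoint, pairwise disconnected components,
each of size at most `d - 1`. -/
def SmallComponents {V : Type*} [DecidableEq V] (G : SimpleGraph V) (d : ℕ)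
    (A : Finset V) : Prop :=
  ∃ (ℓ : ℕ) (U : Fin ℓ → Finset V), A = Finset.univ.biUnion U ∧
    (∀ i, (U i).card < d) ∧
    ∀ i j, i ≠ j → Disjoint (U i) (U j) ∧ Disconn G (U i) (U j)

/-- In a rooted binary tree of vertex subsets (root labeled `V`, children
disjoint subsets of their parent, each of size at most `2/3` of the parent), for any real
`r > 0`, the nodes labeled by sets of size in `(2r/3, r]` have pairwise disjoint labels,
and there are at most `3n/(2r)` such nodes. -/
lemma diverge_lemma : ∀ (l l' : List Bool), ¬ l <+: l' → ¬ l' <+: l →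
    ∃ (p : List Bool) (b b' : Bool), b ≠ b' ∧ (p ++ [b]) <+: l ∧ (p ++ [b']) <+: l' := by
  intro l
  induction l with
  | nil => intro l' h _; exact absurd (List.nil_prefix) h
  | cons a t ih =>
    intro l' h h'
    cases l' with
    | nil => exact absurd (List.nil_prefix) h'
    | cons a' t' =>
      by_cases hab : a = a'
      · subst hab
        obtain ⟨p, b, b', hne, h1, h2⟩ := ih t'
          (fun hp => h (by simpa [List.cons_prefix_cons] using hp))
          (fun hp => h' (by simpa [List.cons_prefix_cons] using hp))
        exact ⟨a :: p, b, b', hne, by simpa [List.cons_prefix_cons] using h1,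
          by simpa [List.cons_prefix_cons] using h2⟩
      · exact ⟨[], a, a', hab, ⟨t, rfl⟩, ⟨t', rfl⟩⟩

theorem tree_level_counting {V : Type*} [Fintype V] [DecidableEq V]
    (N : Finset (List Bool)) (L : List Bool → Finset V)
    (hroot : ([] : List Bool) ∈ N) (hrootL : L [] = Finset.univ)
    (hclosed : ∀ l ∈ N, ∀ l' : List Bool, l' <+: l → l' ∈ N)
    (hsub : ∀ (l : List Bool) (b : Bool), l ++ [b] ∈ N → L (l ++ [b]) ⊆ L l)
    (hdisj : ∀ l : List Bool, l ++ [false] ∈ N → l ++ [true] ∈ N →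
      Disjoint (L (l ++ [false])) (L (l ++ [true])))
    (hsize : ∀ (l : List Bool) (b : Bool), l ++ [b] ∈ N →
      3 * (L (l ++ [b])).card ≤ 2 * (L l).card)
    (r : ℝ) (hr : 0 < r) :
    (∀ l ∈ N, ∀ l' ∈ N, l ≠ l' →
      2 * r / 3 < ((L l).card : ℝ) → ((L l).card : ℝ) ≤ r →
      2 * r / 3 < ((L l').card : ℝ) → ((L l').card : ℝ) ≤ r →
      Disjoint (L l) (L l')) ∧
    (((N.filter fun l => 2 * r / 3 < ((L l).card : ℝ) ∧ ((L l).card : ℝ) ≤ r).card : ℝ)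
      ≤ 3 * (Fintype.card V) / (2 * r)) := by
  classical
  -- labels shrink along prefixes
  have hpre : ∀ l ∈ N, ∀ l' : List Bool, l' <+: l → L l ⊆ L l' := by
    intro l
    induction l using List.reverseRecOn with
    | nil =>
      intro _ l' hl'
      rw [List.prefix_nil.mp hl']
    | append_singleton m b ih =>
      intro hm l' hl'
      obtain ⟨t, ht⟩ := hl'
      rcases t.eq_nil_or_concat with rfl | ⟨t2, c, rfl⟩
      · simp at ht; subst ht; exact subset_rfl
      · have hm2 : l' ++ t2 = m := by
          have h := ht
          simp only [List.concat_eq_append] at h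
          rw [← List.append_assoc] at h
          exact (List.append_inj' h rfl).1
        have hmN : m ∈ N := hclosed _ hm m ⟨[b], rfl⟩
        exact (hsub m b hm).trans (ih hmN l' ⟨t2, hm2⟩)
  -- a strict descendant of a node of size ≤ r has size ≤ 2r/3
  have hdesc : ∀ a ∈ N, ∀ a' ∈ N, a <+: a' → a ≠ a' → ((L a).card : ℝ) ≤ r →
      ((L a').card : ℝ) ≤ 2 * r / 3 := by
    intro a ha a' ha' ⟨t, ht⟩ hne hle
    rcases t with _ | ⟨b, t2⟩
    · simp at ht; exact absurd ht hne
    · have hmid : a ++ [b] <+: a' := ⟨t2, by simp [← ht]⟩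
      have hmidN : a ++ [b] ∈ N := hclosed _ ha' _ hmid
      have h1 := hsize a b hmidN
      have h2 : (L a').card ≤ (L (a ++ [b])).card :=
        Finset.card_le_card (hpre a' ha' _ hmid)
      have h1' : 3 * ((L (a ++ [b])).card : ℝ) ≤ 2 * ((L a).card : ℝ) := by
        exact_mod_cast h1
      have h2' : ((L a').card : ℝ) ≤ ((L (a ++ [b])).card : ℝ) := by exact_mod_cast h2
      linarith
  have part1 : ∀ l ∈ N, ∀ l' ∈ N, l ≠ l' →
      2 * r / 3 < ((L l).card : ℝ) → ((L l).card : ℝ) ≤ r →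
      2 * r / 3 < ((L l').card : ℝ) → ((L l').card : ℝ) ≤ r →
      Disjoint (L l) (L l') := by
    intro l hl l' hl' hne h1 h2 h3 h4
    by_cases hp1 : l <+: l'
    · exact absurd (hdesc l hl l' hl' hp1 hne h2) (not_le.mpr h3)
    by_cases hp2 : l' <+: l
    · exact absurd (hdesc l' hl' l hl hp2 (Ne.symm hne) h4) (not_le.mpr h1)
    obtain ⟨p, b, b', hbne, hq1, hq2⟩ := diverge_lemma l l' hp1 hp2
    have hb1 : p ++ [b] ∈ N := hclosed _ hl _ hq1
    have hb2 : p ++ [b'] ∈ N := hclosed _ hl' _ hq2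
    have hs1 : L l ⊆ L (p ++ [b]) := hpre l hl _ hq1
    have hs2 : L l' ⊆ L (p ++ [b']) := hpre l' hl' _ hq2
    cases b <;> cases b'
    · exact absurd rfl hbne
    · exact Disjoint.mono hs1 hs2 (hdisj p hb1 hb2)
    · exact Disjoint.mono hs1 hs2 (hdisj p hb2 hb1).symm
    · exact absurd rfl hbne
  refine ⟨part1, ?_⟩
  set S := N.filter fun l => 2 * r / 3 < ((L l).card : ℝ) ∧ ((L l).card : ℝ) ≤ r with hSdef
  have hpd : ∀ l ∈ S, ∀ l' ∈ S, l ≠ l' → Disjoint (L l) (L l') := by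
    intro l hl l' hl' hne
    rw [hSdef, mem_filter] at hl hl'
    exact part1 l hl.1 l' hl'.1 hne hl.2.1 hl.2.2 hl'.2.1 hl'.2.2
  have hsum : ∑ l ∈ S, (L l).card ≤ Fintype.card V := by
    rw [← Finset.card_biUnion hpd]
    exact Finset.card_le_univ _
  have hsum' : ∑ l ∈ S, ((L l).card : ℝ) ≤ (Fintype.card V : ℝ) := by
    push_cast
    exact_mod_cast hsum
  have hlb : (S.card : ℝ) * (2 * r / 3) ≤ ∑ l ∈ S, ((L l).card : ℝ) := by
    have := Finset.card_nsmul_le_sum S (fun l => ((L l).card : ℝ)) (2 * r / 3)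
      (fun l hl => le_of_lt (by rw [hSdef, mem_filter] at hl; exact hl.2.1))
    simpa [nsmul_eq_mul] using this
  rw [le_div_iff₀ (by positivity)]
  nlinarith [hlb.trans hsum']
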